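/- Let β > 1 be real, q ≥ 2 and m ≥ 2 integers, and θ ≥ mq an integer. Define g_q(s) = a^(q-l)(a+1)^l where s = aq + l, a = ⌊s/q⌋, 0 ≤ l ≤ q-1. Over all m-tuples of integers (s_1, ..., s_m) with each s_i ≥ q and s_1 + ... + s_m = θ, the sum f(s) = g_q(s_1)^β + ... + g_q(s_m)^β attains its maximum exactly at tuples that are permutations of (q, q, ..., q, θ - (m-1)q). -/

import Mathlib

/-- The balanced product function: `g q s = a^(q-l) * (a+1)^l` where
`a = ⌊s/q⌋` and `l = s % q`. -/
def balancedProd (q s : ℕ) : ℕ := (s / q) ^ (q - s % q) * (s / q + 1) ^ (s % q)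

/-- Fundamental identity: `(u/q) * g(u+1) = (u/q + 1) * g(u)`. -/
lemma bp_id (q u : ℕ) (hq : 1 ≤ q) :
    (u / q) * balancedProd q (u + 1) = (u / q + 1) * balancedProd q u := by
  have hl : u % q < q := Nat.mod_lt _ (by omega)
  have hu : q * (u / q) + u % q = u := Nat.div_add_mod u q
  set a := u / q with ha
  set l := u % q with hlq
  by_cases hl2 : l + 1 < q
  · have hd : (u + 1) / q = a := by
      have : u + 1 = (l + 1) + q * a := by omega
      rw [this, Nat.add_mul_div_left _ _ (by omega : 0 < q), Nat.div_eq_of_lt hl2]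
      omega
    have hmo : (u + 1) % q = l + 1 := by
      have : u + 1 = (l + 1) + q * a := by omega
      rw [this, Nat.add_mul_mod_self_left, Nat.mod_eq_of_lt hl2]
    unfold balancedProd
    rw [hd, hmo, ← ha, ← hlq]
    have h1 : q - l = (q - (l + 1)) + 1 := by omega
    rw [h1, pow_succ, pow_succ]
    ring
  · have hlq1 : l + 1 = q := by omega
    have hq1 : u + 1 = q * (a + 1) := by
      have : q * (a + 1) = q * a + q := by ring
      omega
    have hd : (u + 1) / q = a + 1 := by
      rw [hq1, Nat.mul_div_cancel_left _ (by omega : 0 < q)]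
    have hmo : (u + 1) % q = 0 := by rw [hq1, Nat.mul_mod_right]
    unfold balancedProd
    rw [hd, hmo, ← ha, ← hlq]
    have h1 : q - l = 1 := by omega
    have h2 : q - 0 = l + 1 := by omega
    rw [h1, h2, pow_succ, pow_one, pow_zero]
    ring

lemma bp_pos {q u : ℕ} (hq : 1 ≤ q) (hu : q ≤ u) : 0 < balancedProd q u := by
  have ha : 1 ≤ u / q := (Nat.one_le_div_iff (by omega)).mpr hu
  unfold balancedProd
  exact Nat.mul_pos (Nat.pow_pos (by omega)) (Nat.pow_pos (by omega))

lemma bp_mono {q u : ℕ} (hq : 1 ≤ q) (hu : q ≤ u) :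
    balancedProd q u < balancedProd q (u + 1) := by
  have ha : 1 ≤ u / q := (Nat.one_le_div_iff (by omega)).mpr hu
  have hid := bp_id q u hq
  have hp := bp_pos hq hu
  have : u / q * balancedProd q u < u / q * balancedProd q (u + 1) := by
    rw [hid]; nlinarith
  exact Nat.lt_of_mul_lt_mul_left this

lemma bp_convex {q u : ℕ} (hq : 1 ≤ q) (hu : q ≤ u) :
    2 * balancedProd q (u + 1) ≤ balancedProd q u + balancedProd q (u + 2) := by
  have ha : 1 ≤ u / q := (Nat.one_le_div_iff (by omega)).mpr hu
  have hid1 := bp_id q u hq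
  have hid2 := bp_id q (u + 1) hq
  rw [show u + 1 + 1 = u + 2 by omega] at hid2
  set a := u / q with haa
  set b := (u + 1) / q with hbb
  have hab : a ≤ b := Nat.div_le_div_right (by omega)
  have hb : b ≤ a + 1 := by
    have h1 : (u + 1) / q ≤ (u + q) / q := Nat.div_le_div_right (by omega)
    have h2 : (u + q) / q = u / q + 1 := Nat.add_div_right u (by omega)
    omega
  have hpos : 0 < (a + 1) * b := Nat.mul_pos (by omega) (by omega)
  have key : ((a + 1) * b) * (2 * balancedProd q (u + 1)) ≤
      ((a + 1) * b) * (balancedProd q u + balancedProd q (u + 2)) := by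
    have e1 : ((a + 1) * b) * balancedProd q u = b * (a * balancedProd q (u + 1)) := by
      rw [hid1]; ring
    have e2 : ((a + 1) * b) * balancedProd q (u + 2) = (a + 1) * ((b + 1) * balancedProd q (u + 1)) := by
      rw [← hid2]; ring
    calc ((a + 1) * b) * (2 * balancedProd q (u + 1))
        = (2 * (a * b) + 2 * b) * balancedProd q (u + 1) := by ring
      _ ≤ (a * b + (a + 1) * (b + 1)) * balancedProd q (u + 1) := by
          exact Nat.mul_le_mul_right _ (by nlinarith)
      _ = ((a + 1) * b) * (balancedProd q u + balancedProd q (u + 2)) := by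
          conv_rhs => rw [Nat.mul_add, e1, e2]
          ring
  exact Nat.le_of_mul_le_mul_left key hpos

/-- Strict convexity of `x ↦ x^β` applied to three points. -/
lemma rpow_three_pt {β c d e : ℝ} (hβ : 1 < β) (hc : 0 < c) (hcd : c < d) (hde : d < e)
    (hconv : 2 * d ≤ c + e) : 2 * d ^ β < c ^ β + e ^ β := by
  have hsc := strictConvexOn_rpow hβ
  have hmem_c : c ∈ Set.Ici (0:ℝ) := le_of_lt hc
  have hmem_e : e ∈ Set.Ici (0:ℝ) := by
    simp only [Set.mem_Ici]; linarith
  have hne : c ≠ e := by linarith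
  have hmid := hsc.2 hmem_c hmem_e hne (by norm_num : (0:ℝ) < 1/2) (by norm_num : (0:ℝ) < 1/2)
    (by norm_num)
  simp only [smul_eq_mul] at hmid
  have hdm : d ≤ (1/2 * c + 1/2 * e) := by linarith
  have h1 : d ^ β ≤ (1/2 * c + 1/2 * e) ^ β :=
    Real.rpow_le_rpow (le_of_lt (lt_trans hc hcd)) hdm (by linarith)
  linarith

theorem stmt_12 (β : ℝ) (hβ : 1 < β) (q m θ : ℕ) (hq : 2 ≤ q) (hm : 2 ≤ m)
    (hθ : m * q ≤ θ)
    (s : Fin m → ℕ) (hs : ∀ i, q ≤ s i) (hsum : ∑ i, s i = θ) :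
    ((∀ s' : Fin m → ℕ, (∀ i, q ≤ s' i) → (∑ i, s' i = θ) →
        ∑ i, ((balancedProd q (s' i) : ℝ)) ^ β ≤
          ∑ i, ((balancedProd q (s i) : ℝ)) ^ β)
      ↔ ∃ j : Fin m, s j = θ - (m - 1) * q ∧ ∀ i, i ≠ j → s i = q) := by
  classical
  have hq1 : 1 ≤ q := by omega
  set G : ℕ → ℝ := fun n => ((balancedProd q n : ℝ)) ^ β with hGdef
  -- discrete strict convexity of G on [q, ∞)
  have Gconv : ∀ u : ℕ, q ≤ u → 2 * G (u + 1) < G u + G (u + 2) := by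
    intro u hu
    have h1 := bp_pos hq1 hu
    have h2 := bp_mono hq1 hu
    have h3 := bp_mono hq1 (by omega : q ≤ u + 1)
    have h4 := bp_convex hq1 hu
    have := rpow_three_pt (c := (balancedProd q u : ℝ)) (d := (balancedProd q (u+1) : ℝ))
      (e := (balancedProd q (u+2) : ℝ)) hβ (by exact_mod_cast h1) (by exact_mod_cast h2)
      (by exact_mod_cast h3) (by exact_mod_cast h4)
    simpa [hGdef] using this
  -- strict monotonicity of differences
  have Dlt : ∀ u v : ℕ, q ≤ u → u < v → G (u + 1) - G u < G (v + 1) - G v := by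
    intro u v hu huv
    induction v, huv using Nat.le_induction with
    | base => have := Gconv u hu; linarith
    | succ w hw ih =>
        have := Gconv w (by omega)
        linarith
  -- exchange lemma
  have exch : ∀ (t : Fin m → ℕ) (i j : Fin m), i ≠ j → (∀ k, q ≤ t k) → q < t i → t i ≤ t j →
      ∃ t' : Fin m → ℕ, (∀ k, q ≤ t' k) ∧ (∑ k, t' k = ∑ k, t k) ∧
        ∑ k, G (t k) < ∑ k, G (t' k) := by
    intro t i j hij ht hi hle
    set t' : Fin m → ℕ := Function.update (Function.update t i (t i - 1)) j (t j + 1) with ht'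
    have ht'j : t' j = t j + 1 := by simp [ht']
    have ht'i : t' i = t i - 1 := by
      simp [ht', Function.update_of_ne hij]
    have ht'o : ∀ k, k ≠ i → k ≠ j → t' k = t k := by
      intro k hki hkj
      simp [ht', Function.update_of_ne hkj, Function.update_of_ne hki]
    have hmemj : j ∈ (Finset.univ : Finset (Fin m)) := Finset.mem_univ j
    have hmemi : i ∈ (Finset.univ : Finset (Fin m)).erase j := by
      simp [Finset.mem_erase, hij]
    refine ⟨t', ?_, ?_, ?_⟩
    · intro k
      by_cases hkj : k = j
      · rw [hkj, ht'j]; have := ht j; omega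
      · by_cases hki : k = i
        · rw [hki, ht'i]; omega
        · rw [ht'o k hki hkj]; exact ht k
    · -- sums equal
      have split : ∀ f : Fin m → ℕ, ∑ k, f k = f j + (f i + ∑ k ∈ (Finset.univ.erase j).erase i, f k) := by
        intro f
        rw [← Finset.add_sum_erase _ f hmemj, ← Finset.add_sum_erase _ f hmemi]
      rw [split t', split t, ht'j, ht'i]
      have hrest : ∑ k ∈ (Finset.univ.erase j).erase i, t' k =
          ∑ k ∈ (Finset.univ.erase j).erase i, t k := by
        apply Finset.sum_congr rfl
        intro k hk
        simp only [Finset.mem_erase] at hk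
        exact ht'o k hk.1 hk.2.1
      omega
    · have split : ∀ f : Fin m → ℝ, ∑ k, f k = f j + (f i + ∑ k ∈ (Finset.univ.erase j).erase i, f k) := by
        intro f
        rw [← Finset.add_sum_erase _ f hmemj, ← Finset.add_sum_erase _ f hmemi]
      rw [split (fun k => G (t' k)), split (fun k => G (t k))]
      rw [ht'j, ht'i]
      have hrest : ∑ k ∈ (Finset.univ.erase j).erase i, G (t' k) =
          ∑ k ∈ (Finset.univ.erase j).erase i, G (t k) := by
        apply Finset.sum_congr rfl
        intro k hk
        simp only [Finset.mem_erase] at hk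
        rw [ht'o k hk.1 hk.2.1]
      rw [hrest]
      have hd := Dlt (t i - 1) (t j) (by omega) (by omega)
      have hsub : t i - 1 + 1 = t i := by omega
      rw [hsub] at hd
      linarith
  -- maximizers are extremal
  have key : ∀ t : Fin m → ℕ, (∀ i, q ≤ t i) → (∑ i, t i = θ) →
      (∀ t' : Fin m → ℕ, (∀ i, q ≤ t' i) → (∑ i, t' i = θ) →
        ∑ i, G (t' i) ≤ ∑ i, G (t i)) →
      ∃ j, t j = θ - (m - 1) * q ∧ ∀ i, i ≠ j → t i = q := by
    intro t ht htsum hmax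
    have pair : ∀ i j : Fin m, i ≠ j → t i = q ∨ t j = q := by
      intro i j hij
      by_contra hcon
      push_neg at hcon
      have hi : q < t i := lt_of_le_of_ne (ht i) (Ne.symm hcon.1)
      have hj : q < t j := lt_of_le_of_ne (ht j) (Ne.symm hcon.2)
      rcases le_total (t i) (t j) with h | h
      · obtain ⟨t', h1, h2, h3⟩ := exch t i j hij ht hi h
        have := hmax t' h1 (by rw [h2, htsum])
        linarith
      · obtain ⟨t', h1, h2, h3⟩ := exch t j i (Ne.symm hij) ht hj h
        have := hmax t' h1 (by rw [h2, htsum])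
        linarith
    by_cases hall : ∀ i, t i = q
    · have hθq : θ = m * q := by
        rw [← htsum]
        have : ∑ i, t i = ∑ _i : Fin m, q := Finset.sum_congr rfl (fun i _ => hall i)
        rw [this, Finset.sum_const, Finset.card_univ, Fintype.card_fin, smul_eq_mul]
      refine ⟨⟨0, by omega⟩, ?_, fun i _ => hall i⟩
      rw [hall]
      have h1 : (m - 1) * q = m * q - q := by rw [Nat.sub_one_mul]
      have h2 : q ≤ m * q := Nat.le_mul_of_pos_left q (by omega)
      omega
    · push_neg at hall
      obtain ⟨j, hj⟩ := hall
      have heq : ∀ i, i ≠ j → t i = q := by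
        intro i hij
        exact (pair i j hij).resolve_right hj
      have hsum2 : t j + (m - 1) * q = θ := by
        rw [← htsum, ← Finset.add_sum_erase _ t (Finset.mem_univ j)]
        have : ∑ i ∈ Finset.univ.erase j, t i = ∑ _i ∈ Finset.univ.erase j, q :=
          Finset.sum_congr rfl (fun i hi => heq i (Finset.ne_of_mem_erase hi))
        rw [this, Finset.sum_const, Finset.card_erase_of_mem (Finset.mem_univ j),
          Finset.card_univ, Fintype.card_fin, smul_eq_mul]
      exact ⟨j, by omega, heq⟩
  -- value of extremal tuples
  have hval : ∀ t : Fin m → ℕ, (∃ j, t j = θ - (m - 1) * q ∧ ∀ i, i ≠ j → t i = q) →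
      ∑ i, G (t i) = G (θ - (m - 1) * q) + ((m : ℝ) - 1) * G q := by
    intro t ⟨j, hj1, hj2⟩
    rw [← Finset.add_sum_erase _ (fun k => G (t k)) (Finset.mem_univ j)]
    have : ∑ i ∈ Finset.univ.erase j, G (t i) = ∑ _i ∈ Finset.univ.erase j, G q :=
      Finset.sum_congr rfl (fun i hi => by rw [hj2 i (Finset.ne_of_mem_erase hi)])
    rw [hj1, this, Finset.sum_const, Finset.card_erase_of_mem (Finset.mem_univ j),
      Finset.card_univ, Fintype.card_fin, nsmul_eq_mul]
    have : ((m - 1 : ℕ) : ℝ) = (m : ℝ) - 1 := by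
      have : 1 ≤ m := by omega
      push_cast [this]; ring
    rw [this]
  constructor
  · intro hmax
    exact key s hs hsum hmax
  · intro hext t' ht' hsum'
    -- finite feasible set
    set F : Finset (Fin m → ℕ) :=
      (Fintype.piFinset fun _ : Fin m => Finset.range (θ + 1)).filter
        (fun t => (∀ i, q ≤ t i) ∧ ∑ i, t i = θ) with hF
    have memF : ∀ t : Fin m → ℕ, (∀ i, q ≤ t i) → (∑ i, t i = θ) → t ∈ F := by
      intro t h1 h2
      rw [hF, Finset.mem_filter]
      refine ⟨?_, h1, h2⟩
      rw [Fintype.mem_piFinset]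
      intro i
      rw [Finset.mem_range]
      have : t i ≤ ∑ k, t k :=
        Finset.single_le_sum (fun k _ => Nat.zero_le _) (Finset.mem_univ i)
      omega
    obtain ⟨tm, htmF, htmax⟩ := F.exists_max_image (fun t => ∑ i, G (t i)) ⟨s, memF s hs hsum⟩
    rw [hF, Finset.mem_filter] at htmF
    obtain ⟨_, htm1, htm2⟩ := htmF
    have htmmax : ∀ t' : Fin m → ℕ, (∀ i, q ≤ t' i) → (∑ i, t' i = θ) →
        ∑ i, G (t' i) ≤ ∑ i, G (tm i) := fun t' h1 h2 => htmax t' (memF t' h1 h2)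
    have hextm := key tm htm1 htm2 htmmax
    calc ∑ i, G (t' i) ≤ ∑ i, G (tm i) := htmmax t' ht' hsum'
      _ = G (θ - (m - 1) * q) + ((m : ℝ) - 1) * G q := hval tm hextm
      _ = ∑ i, G (s i) := (hval s hext).symm
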